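/- arXiv:math/0112298 — 3 statements merged into one kernel-verified Lean document; each statement's English description precedes it below -/
import Mathlib

section
/- With v = 1/(1+j) and d = j/(1+j), the squared-increasing annuity-due satisfies (I²s̈)_k = ((1+v)(s̈_k + k²) − 2k − 2k²)/d². -/
lemma geom_sum_Icc_aux (j : ℝ) (k : ℕ) :
    (1 + j) ^ (k+1) = j * (∑ i ∈ Finset.Icc 1 k, (1 + j) ^ i) + (1 + j) := by
  induction k with
  | zero => simp [pow_succ]
  | succ n ihn =>
    rw [Finset.sum_Icc_succ_top (by omega), pow_succ (1+j) (n+1), ihn]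
    ring


theorem sq_increasing_annuity_via_v (j : ℝ) (hj : 0 < j) (k : ℕ) :
    (∑ m ∈ Finset.Icc 1 k, (m : ℝ) ^ 2 * (1 + j) ^ (k - m + 1)) =
      ((1 + 1 / (1 + j)) * ((∑ i ∈ Finset.Icc 1 k, (1 + j) ^ i) + (k : ℝ) ^ 2) -
        2 * k - 2 * (k : ℝ) ^ 2) / (j / (1 + j)) ^ 2 := by
  have h1j : (1 : ℝ) + j ≠ 0 := by positivity
  have hjne : j ≠ 0 := ne_of_gt hj
  induction k with
  | zero => simp
  | succ k ih =>
    have hsplitL : (∑ m ∈ Finset.Icc 1 (k+1), (m : ℝ) ^ 2 * (1 + j) ^ (k + 1 - m + 1))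
        = (∑ m ∈ Finset.Icc 1 k, (m : ℝ) ^ 2 * (1 + j) ^ (k + 1 - m + 1))
          + ((k:ℝ)+1) ^ 2 * (1 + j) := by
      rw [Finset.sum_Icc_succ_top (by omega)]
      push_cast
      simp
    have hshift : (∑ m ∈ Finset.Icc 1 k, (m : ℝ) ^ 2 * (1 + j) ^ (k + 1 - m + 1))
        = (1 + j) * ∑ m ∈ Finset.Icc 1 k, (m : ℝ) ^ 2 * (1 + j) ^ (k - m + 1) := by
      rw [Finset.mul_sum]
      refine Finset.sum_congr rfl fun m hm => ?_
      have hmk : m ≤ k := (Finset.mem_Icc.mp hm).2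
      have : k + 1 - m + 1 = (k - m + 1) + 1 := by omega
      rw [this, pow_succ]; ring
    have hS : (∑ i ∈ Finset.Icc 1 (k+1), (1 + j) ^ i)
        = (∑ i ∈ Finset.Icc 1 k, (1 + j) ^ i) + (1 + j) ^ (k+1) := by
      rw [Finset.sum_Icc_succ_top (by omega)]
    have hSk := geom_sum_Icc_aux j k
    rw [hsplitL, hshift, ih, hS, hSk]
    push_cast
    field_simp
    ring
end

section
/- The square of the level annuity accumulated value satisfies (s̈_k)² = (s̈_{2k} − 2·s̈_k)/d, where d = j/(1+j). -/
theorem annuity_square_formula (j : ℝ) (hj : 0 < j) (k : ℕ) :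
    (∑ i ∈ Finset.Icc 1 k, (1 + j) ^ i) ^ 2 =
      ((∑ i ∈ Finset.Icc 1 (2 * k), (1 + j) ^ i) -
        2 * ∑ i ∈ Finset.Icc 1 k, (1 + j) ^ i) / (j / (1 + j)) := by
  set x := 1 + j with hx
  have hx0 : x ≠ 0 := by positivity
  have hj0 : j ≠ 0 := ne_of_gt hj
  have key : ∀ n : ℕ, ∑ i ∈ Finset.Icc 1 n, x ^ i = x * (x ^ n - 1) / j := by
    intro n
    induction n with
    | zero => simp
    | succ m ih =>
      rw [Finset.sum_Icc_succ_top (by omega), ih]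
      field_simp
      ring
  rw [key k, key (2 * k), pow_mul']
  field_simp
  ring
end

section
/- The square of the increasing annuity accumulated value satisfies ((Is̈)_k)² = ((Is̈)_{2k} − 2(1+kd)(Is̈)_k − k²)/d², where d = j/(1+j). -/
lemma increasing_annuity_closed (j : ℝ) (hj : 0 < j) (k : ℕ) :
    ∑ m ∈ Finset.Icc 1 k, (m : ℝ) * (1 + j) ^ (k - m + 1) =
      ((1 + j) ^ k * (1 + j) ^ 2 - (1 + j) ^ 2 - (k : ℝ) * j * (1 + j)) / j ^ 2 := by
  induction k with
  | zero => simp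
  | succ k ih =>
    rw [Finset.sum_Icc_succ_top (by omega : 1 ≤ k + 1)]
    have hstep : ∀ m ∈ Finset.Icc 1 k,
        (m : ℝ) * (1 + j) ^ (k + 1 - m + 1) = (1 + j) * ((m : ℝ) * (1 + j) ^ (k - m + 1)) := by
      intro m hm
      simp only [Finset.mem_Icc] at hm
      have : k + 1 - m + 1 = (k - m + 1) + 1 := by omega
      rw [this, pow_succ]
      ring
    rw [Finset.sum_congr rfl hstep, ← Finset.mul_sum, ih]
    have hj' : j ≠ 0 := ne_of_gt hj
    have : k + 1 - (k + 1) + 1 = 1 := by omega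
    rw [this]
    push_cast
    field_simp
    ring

theorem increasing_annuity_square_formula (j : ℝ) (hj : 0 < j) (k : ℕ) :
    (∑ m ∈ Finset.Icc 1 k, (m : ℝ) * (1 + j) ^ (k - m + 1)) ^ 2 =
      ((∑ m ∈ Finset.Icc 1 (2 * k), (m : ℝ) * (1 + j) ^ (2 * k - m + 1)) -
        2 * (1 + k * (j / (1 + j))) *
          (∑ m ∈ Finset.Icc 1 k, (m : ℝ) * (1 + j) ^ (k - m + 1)) -
        (k : ℝ) ^ 2) / (j / (1 + j)) ^ 2 := by
  have hj1 : (0:ℝ) < 1 + j := by linarith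
  have hj1' : (1:ℝ) + j ≠ 0 := ne_of_gt hj1
  have hj' : j ≠ 0 := ne_of_gt hj
  rw [increasing_annuity_closed j hj k, increasing_annuity_closed j hj (2 * k)]
  have h2k : (1 + j) ^ (2 * k) = ((1 + j) ^ k) ^ 2 := by
    rw [pow_mul, ← pow_mul, mul_comm, pow_mul]
  rw [h2k]
  push_cast
  field_simp
  ring
end
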